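/- For any fuzzy cover q and any set function v, there exist partitions P and P' of N such that F^V(p) ≥ F^V(q) ≥ F^V(p'), where p and p' are the Boolean representations of P and P' (i.e., p^A = χ_A if A ∈ P and p^A = 0 otherwise). In particular, the maximum and minimum of F^V over all fuzzy covers are attained at partitions. -/

import Mathlib

open Finset

def IsFuzzyCover {V : Type*} [Fintype V] [DecidableEq V] (q : Finset V → V → ℝ) : Prop :=
  (∀ A i, 0 ≤ q A i ∧ q A i ≤ 1) ∧ (∀ A i, i ∉ A → q A i = 0) ∧
  (∀ i, ∑ A ∈ (Finset.univ : Finset V).powerset, q A i = 1)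

def IsPartition {V : Type*} [Fintype V] [DecidableEq V] (P : Finset (Finset V)) : Prop :=
  (∀ A ∈ P, A ≠ ∅) ∧ (∀ A ∈ P, ∀ B ∈ P, A ≠ B → Disjoint A B) ∧ P.sup id = Finset.univ

/-- The Boolean representation of a partition as a fuzzy cover:
`p^A = χ_A` if `A ∈ P` and `p^A = 0` otherwise. -/
def partitionCover {V : Type*} [Fintype V] [DecidableEq V]
    (P : Finset (Finset V)) : Finset V → V → ℝ :=
  fun A i => if A ∈ P ∧ i ∈ A then 1 else 0

section Aux
variable {V : Type*} [Fintype V] [DecidableEq V]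

set_option linter.unusedSectionVars false in
lemma prod_indicator' (T B : Finset V) :
    (∏ j ∈ B, (if j ∈ T then (1:ℝ) else 0)) = if B ⊆ T then 1 else 0 := by
  by_cases h : B ⊆ T
  · rw [if_pos h]
    exact Finset.prod_eq_one fun j hj => if_pos (h hj)
  · rw [if_neg h]
    obtain ⟨j, hjB, hjT⟩ := Finset.not_subset.mp h
    exact Finset.prod_eq_zero hjB (if_neg hjT)

lemma f_ind (μ : Finset V → ℝ) (f : (V → ℝ) → ℝ)
    (hf : ∀ x : V → ℝ, f x = ∑ B ∈ (Finset.univ : Finset V).powerset,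
      (∏ j ∈ B, x j) * μ B) (T : Finset V) :
    f (fun i => if i ∈ T then (1:ℝ) else 0) = ∑ B ∈ T.powerset, μ B := by
  rw [hf]
  have : ∀ B ∈ (Finset.univ : Finset V).powerset,
      (∏ j ∈ B, (if j ∈ T then (1:ℝ) else 0)) * μ B
        = if B ⊆ T then μ B else 0 := by
    intro B _
    rw [prod_indicator']
    split <;> simp
  rw [Finset.sum_congr rfl this, Finset.sum_ite, Finset.sum_const_zero, add_zero]
  congr 1
  ext B
  simp [Finset.mem_powerset, Finset.subset_univ]

lemma exists_partition_rep (μ : Finset V → ℝ) (f : (V → ℝ) → ℝ)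
    (hf : ∀ x : V → ℝ, f x = ∑ B ∈ (Finset.univ : Finset V).powerset,
      (∏ j ∈ B, x j) * μ B) (σ : V → Finset V) :
    ∃ P : Finset (Finset V), IsPartition P ∧
      (∑ A ∈ (Finset.univ : Finset V).powerset,
          f (fun i => if σ i = A then (1:ℝ) else 0))
        = ∑ A ∈ (Finset.univ : Finset V).powerset, f (partitionCover P A) := by
  classical
  set fib : Finset V → Finset V := fun A => Finset.univ.filter (fun i => σ i = A) with hfib
  set P : Finset (Finset V) := Finset.univ.image (fun i => fib (σ i)) with hP
  have hmemfib : ∀ (i : V) (A : Finset V), i ∈ fib A ↔ σ i = A := by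
    intro i A; simp [hfib]
  have hself : ∀ i : V, i ∈ fib (σ i) := fun i => (hmemfib i (σ i)).mpr rfl
  have hPmem : ∀ C, C ∈ P ↔ ∃ i, fib (σ i) = C := by
    intro C; simp [hP]
  refine ⟨P, ⟨?_, ?_, ?_⟩, ?_⟩
  · -- nonempty
    intro A hA
    obtain ⟨i, hi⟩ := (hPmem A).mp hA
    intro h
    have : i ∈ A := hi ▸ hself i
    rw [h] at this
    simp at this
  · intro A hA B hB hAB
    obtain ⟨i, hi⟩ := (hPmem A).mp hA
    obtain ⟨j, hj⟩ := (hPmem B).mp hB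
    rw [Finset.disjoint_left]
    intro k hkA hkB
    rw [← hi] at hkA; rw [← hj] at hkB
    have h1 := (hmemfib k (σ i)).mp hkA
    have h2 := (hmemfib k (σ j)).mp hkB
    exact hAB (by rw [← hi, ← hj, ← h1, ← h2])
  · apply le_antisymm
    · exact Finset.sup_le fun C _ => Finset.subset_univ C
    · intro i _
      exact Finset.mem_sup.mpr ⟨fib (σ i), (hPmem _).mpr ⟨i, rfl⟩, hself i⟩
  · -- sum equality
    have hPS : ∀ C ∈ P, C ∈ (Finset.univ : Finset V).powerset := by
      intro C _; simp
    have lhs_term : ∀ A : Finset V,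
        f (fun i => if σ i = A then (1:ℝ) else 0) = ∑ B ∈ (fib A).powerset, μ B := by
      intro A
      have : (fun i => if σ i = A then (1:ℝ) else 0)
          = (fun i => if i ∈ fib A then (1:ℝ) else 0) := by
        funext i; simp [hmemfib]
      rw [this, f_ind μ f hf]
    have rhs_term : ∀ A : Finset V,
        f (partitionCover P A)
          = if A ∈ P then ∑ B ∈ A.powerset, μ B else ∑ B ∈ (∅ : Finset V).powerset, μ B := by
      intro A
      by_cases h : A ∈ P
      · rw [if_pos h]
        have : partitionCover P A = fun i => if i ∈ A then (1:ℝ) else 0 := by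
          funext i; simp [partitionCover, h]
        rw [this, f_ind μ f hf]
      · rw [if_neg h]
        have : partitionCover P A = fun i => if i ∈ (∅ : Finset V) then (1:ℝ) else 0 := by
          funext i; simp [partitionCover, h]
        rw [this, f_ind μ f hf]
    rw [Finset.sum_congr rfl (fun A _ => lhs_term A),
      Finset.sum_congr rfl (fun A _ => rhs_term A)]
    -- now pure sum identity about v' T := ∑ B ∈ T.powerset, μ B
    set v' : Finset V → ℝ := fun T => ∑ B ∈ T.powerset, μ B with hv'
    show ∑ A ∈ (Finset.univ : Finset V).powerset, v' (fib A)
        = ∑ A ∈ (Finset.univ : Finset V).powerset, (if A ∈ P then v' A else v' ∅)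
    set S : Finset (Finset V) := (Finset.univ : Finset V).powerset with hS
    have hinj : Set.InjOn fib (S.filter (fun A => (fib A).Nonempty)) := by
      intro A hA A' hA' h
      simp only [Finset.coe_filter, Set.mem_setOf_eq] at hA hA'
      obtain ⟨i, hi⟩ := hA.2
      have hi' : i ∈ fib A' := h ▸ hi
      rw [← (hmemfib i A).mp hi, (hmemfib i A').mp hi']
    have himg : (S.filter (fun A => (fib A).Nonempty)).image fib = P := by
      ext C
      simp only [Finset.mem_image, Finset.mem_filter, hPmem]
      constructor
      · rintro ⟨A, ⟨-, i, hi⟩, hC⟩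
        exact ⟨i, by rw [(hmemfib i A).mp hi, hC]⟩
      · rintro ⟨i, hi⟩
        exact ⟨σ i, ⟨by simp [hS], ⟨i, hself i⟩⟩, hi⟩
    have hfilterP : S.filter (fun A => A ∈ P) = P := by
      ext C; simp [hS]
    have hcard : (S.filter (fun A => (fib A).Nonempty)).card = P.card := by
      rw [← himg, Finset.card_image_of_injOn hinj]
    rw [← Finset.sum_filter_add_sum_filter_not S (fun A => (fib A).Nonempty) (fun A => v' (fib A)),
        ← Finset.sum_filter_add_sum_filter_not S (fun A => A ∈ P) (fun A => if A ∈ P then v' A else v' ∅)]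
    congr 1
    · rw [← Finset.sum_image (f := v') (g := fib) (fun x hx y hy h => hinj hx hy h), himg,
        hfilterP]
      exact Finset.sum_congr rfl fun A hA => (if_pos hA).symm
    · have h1 : ∀ A ∈ S.filter (fun A => ¬(fib A).Nonempty), v' (fib A) = v' ∅ := by
        intro A hA
        have := (Finset.mem_filter.mp hA).2
        rw [Finset.not_nonempty_iff_eq_empty.mp this]
      have h2 : ∀ A ∈ S.filter (fun A => ¬A ∈ P),
          (if A ∈ P then v' A else v' ∅) = v' ∅ := by
        intro A hA
        rw [if_neg (Finset.mem_filter.mp hA).2]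
      rw [Finset.sum_congr rfl h1, Finset.sum_congr rfl h2,
        Finset.sum_const, Finset.sum_const]
      congr 1
      have c1 := Finset.card_filter_add_card_filter_not (s := S) (fun A => (fib A).Nonempty)
      have c2 := Finset.card_filter_add_card_filter_not (s := S) (fun A => A ∈ P)
      rw [hfilterP] at c2
      omega

lemma expand_core (q : Finset V → V → ℝ)
    (hqsum : ∀ i, ∑ A ∈ (Finset.univ : Finset V).powerset, q A i = 1)
    (A : Finset V) (B : Finset V) :
    ∏ j ∈ B, q A j
      = ∑ σ ∈ Fintype.piFinset (fun _ : V => (Finset.univ : Finset V).powerset),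
          (∏ i, q (σ i) i) * ∏ j ∈ B, (if σ j = A then (1:ℝ) else 0) := by
  classical
  have expand := Finset.prod_univ_sum (fun _ : V => (Finset.univ : Finset V).powerset)
      (fun i c => q c i * (if i ∈ B then (if c = A then (1:ℝ) else 0) else 1))
  have lhs_eq : (∏ i : V, ∑ c ∈ (Finset.univ : Finset V).powerset,
      q c i * (if i ∈ B then (if c = A then (1:ℝ) else 0) else 1)) = ∏ j ∈ B, q A j := by
    have inner : ∀ i : V, (∑ c ∈ (Finset.univ : Finset V).powerset,
        q c i * (if i ∈ B then (if c = A then (1:ℝ) else 0) else 1))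
          = if i ∈ B then q A i else 1 := by
      intro i
      by_cases hi : i ∈ B
      · simp only [hi, if_true, mul_ite, mul_one, mul_zero]
        rw [Finset.sum_ite_eq' _ A (fun c => q c i)]
        simp
      · simp only [hi, if_false, mul_one]
        exact hqsum i
    rw [Finset.prod_congr rfl (fun i _ => inner i), Finset.prod_ite_mem, Finset.univ_inter]
  have rhs_eq : ∀ σ : V → Finset V,
      (∏ i : V, q (σ i) i * (if i ∈ B then (if σ i = A then (1:ℝ) else 0) else 1))
        = (∏ i, q (σ i) i) * ∏ j ∈ B, (if σ j = A then (1:ℝ) else 0) := by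
    intro σ
    rw [Finset.prod_mul_distrib, Finset.prod_ite_mem, Finset.univ_inter]
  rw [← lhs_eq, expand]
  exact Finset.sum_congr rfl fun σ _ => rhs_eq σ

end Aux

/-- The value of the global score on any fuzzy cover is sandwiched between its values
on two partitions: maxima and minima of `F^V` are attained at partitions. -/
theorem fuzzy_score_sandwiched_by_partitions
    {V : Type*} [Fintype V] [DecidableEq V]
    (v : Finset V → ℝ) (μ : Finset V → ℝ)
    (hv : ∀ B : Finset V, v B = ∑ A ∈ B.powerset, μ A)
    (f : (V → ℝ) → ℝ)
    (hf : ∀ x : V → ℝ, f x = ∑ B ∈ (Finset.univ : Finset V).powerset,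
      (∏ j ∈ B, x j) * μ B)
    (q : Finset V → V → ℝ) (hq : IsFuzzyCover q) :
    ∃ P P' : Finset (Finset V), IsPartition P ∧ IsPartition P' ∧
      (∑ A ∈ (Finset.univ : Finset V).powerset, f (partitionCover P' A)) ≤
        (∑ A ∈ (Finset.univ : Finset V).powerset, f (q A)) ∧
      (∑ A ∈ (Finset.univ : Finset V).powerset, f (q A)) ≤
        (∑ A ∈ (Finset.univ : Finset V).powerset, f (partitionCover P A)) := by
  classical
  obtain ⟨hq01, -, hqsum⟩ := hq
  set S : Finset (Finset V) := (Finset.univ : Finset V).powerset with hS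
  set T : Finset (V → Finset V) := Fintype.piFinset (fun _ : V => S) with hT
  set w : (V → Finset V) → ℝ := fun σ => ∏ i, q (σ i) i with hw
  set G : (V → Finset V) → ℝ :=
    fun σ => ∑ A ∈ S, f (fun i => if σ i = A then (1:ℝ) else 0) with hG
  set Fq : ℝ := ∑ A ∈ S, f (q A) with hFq
  have wnn : ∀ σ, 0 ≤ w σ := fun σ => Finset.prod_nonneg fun i _ => (hq01 _ _).1
  have wsum : ∑ σ ∈ T, w σ = 1 := by
    rw [hT, hw, ← Finset.prod_univ_sum (fun _ : V => S) (fun i c => q c i)]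
    rw [Finset.prod_congr rfl fun i _ => hqsum i, Finset.prod_const_one]
  have key : Fq = ∑ σ ∈ T, w σ * G σ := by
    have step1 : Fq = ∑ A ∈ S, ∑ B ∈ S,
        (∑ σ ∈ T, w σ * ∏ j ∈ B, (if σ j = A then (1:ℝ) else 0)) * μ B := by
      rw [hFq]
      refine Finset.sum_congr rfl fun A hA => ?_
      rw [hf]
      refine Finset.sum_congr rfl fun B hB => ?_
      rw [expand_core q hqsum A B]
    rw [step1]
    have step2 : ∀ A ∈ S, ∑ B ∈ S,
        (∑ σ ∈ T, w σ * ∏ j ∈ B, (if σ j = A then (1:ℝ) else 0)) * μ B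
          = ∑ σ ∈ T, ∑ B ∈ S,
            w σ * ((∏ j ∈ B, (if σ j = A then (1:ℝ) else 0)) * μ B) := by
      intro A _
      rw [Finset.sum_comm]
      refine Finset.sum_congr rfl fun B _ => ?_
      rw [Finset.sum_mul]
      exact Finset.sum_congr rfl fun σ _ => by ring
    rw [Finset.sum_congr rfl step2, Finset.sum_comm]
    refine Finset.sum_congr rfl fun σ _ => ?_
    rw [hG, Finset.mul_sum]
    refine Finset.sum_congr rfl fun A _ => ?_
    rw [hf, Finset.mul_sum]
  set T' : Finset (V → Finset V) := T.filter (fun σ => w σ ≠ 0) with hT'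
  have h1 : ∑ σ ∈ T', w σ = 1 := by
    rw [hT', Finset.sum_filter_ne_zero]; exact wsum
  have h2 : ∑ σ ∈ T', w σ * G σ = Fq := by
    rw [hT', Finset.sum_filter_of_ne (fun σ _ h => left_ne_zero_of_mul h)]
    exact key.symm
  have hne : T'.Nonempty := by
    rw [Finset.nonempty_iff_ne_empty]
    intro h
    rw [h, Finset.sum_empty] at h1
    norm_num at h1
  have hFconst : ∑ σ ∈ T', w σ * Fq = Fq := by
    rw [← Finset.sum_mul, h1, one_mul]
  have wpos : ∀ σ ∈ T', 0 < w σ :=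
    fun σ hσ => lt_of_le_of_ne (wnn σ) (Ne.symm (Finset.mem_filter.mp hσ).2)
  obtain ⟨σmax, hσmaxT, hmax⟩ :=
    Finset.exists_le_of_sum_le (f := fun σ => w σ * Fq) (g := fun σ => w σ * G σ)
      hne (le_of_eq (by rw [hFconst, h2]))
  obtain ⟨σmin, hσminT, hmin⟩ :=
    Finset.exists_le_of_sum_le (f := fun σ => w σ * G σ) (g := fun σ => w σ * Fq)
      hne (le_of_eq (by rw [hFconst, h2]))
  have hFmax : Fq ≤ G σmax := (mul_le_mul_iff_right₀ (wpos _ hσmaxT)).mp hmax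
  have hFmin : G σmin ≤ Fq := (mul_le_mul_iff_right₀ (wpos _ hσminT)).mp hmin
  obtain ⟨P, hPpart, hPsum⟩ := exists_partition_rep μ f hf σmax
  obtain ⟨P', hP'part, hP'sum⟩ := exists_partition_rep μ f hf σmin
  refine ⟨P, P', hPpart, hP'part, ?_, ?_⟩
  · rw [← hP'sum]; exact hFmin
  · rw [← hPsum]; exact hFmax
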